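/- Suppose the equation x'(t) = L(t)x_t is shadowable. Then for every t ≥ 0 the phase space decomposes as a direct sum C = 𝒮(t) ⊕ 𝒰(t), where 𝒮(t) is the stable subspace at time t and 𝒰(t) = T(t,0)𝒰 with 𝒰 a fixed complement of 𝒮(0). -/

import Mathlib

open Set

noncomputable section

/-- The Euclidean state space ℝ^d. -/
abbrev Rd (d : ℕ) : Type := EuclideanSpace ℝ (Fin d)

/-- The phase space C = C([-r,0], ℝ^d) with the supremum norm. -/
abbrev Ph (d : ℕ) (r : ℝ) : Type := C(Set.Icc (-r) (0:ℝ), Rd d)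

/-- The segment x_t ∈ C of a continuous function x : ℝ → ℝ^d, x_t(θ) = x(t+θ). -/
def seg (d : ℕ) (r : ℝ) (x : ℝ → Rd d) (hx : Continuous x) (t : ℝ) : Ph d r :=
  ⟨fun θ => x (t + θ.1), hx.comp (continuous_const.add continuous_subtype_val)⟩

/-- `x` is a solution of x'(t) = L(t)x_t on [s, ∞) (right-hand derivative at s). -/
def IsSol (d : ℕ) (r : ℝ) (L : ℝ → (Ph d r →L[ℝ] Rd d)) (s : ℝ)
    (x : ℝ → Rd d) (hx : Continuous x) : Prop :=
  ∀ t, s ≤ t → HasDerivWithinAt x (L t (seg d r x hx t)) (Set.Ici s) t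

/-- `T` is the solution operator family of x'(t) = L(t)x_t :
for every s ≥ 0 and φ ∈ C there is a solution x on [s,∞) with x_s = φ and x_t = T(t,s)φ. -/
def IsSolOp (d : ℕ) (r : ℝ) (L : ℝ → (Ph d r →L[ℝ] Rd d))
    (T : ℝ → ℝ → (Ph d r →L[ℝ] Ph d r)) : Prop :=
  ∀ s, 0 ≤ s → ∀ φ : Ph d r, ∃ (x : ℝ → Rd d) (hx : Continuous x),
    IsSol d r L s x hx ∧ seg d r x hx s = φ ∧ ∀ t, s ≤ t → seg d r x hx t = T t s φ

/-- The evolution family property of the solution operators. -/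
def Cocycle (d : ℕ) (r : ℝ) (T : ℝ → ℝ → (Ph d r →L[ℝ] Ph d r)) : Prop :=
  (∀ s, 0 ≤ s → T s s = ContinuousLinearMap.id ℝ (Ph d r)) ∧
  ∀ τ t s, 0 ≤ s → s ≤ t → t ≤ τ → T τ s = (T τ t).comp (T t s)

/-- Uniqueness of solutions with a given initial segment at time s. -/
def UniqueSol (d : ℕ) (r : ℝ) (L : ℝ → (Ph d r →L[ℝ] Rd d)) : Prop :=
  ∀ s, 0 ≤ s → ∀ (x y : ℝ → Rd d) (hx : Continuous x) (hy : Continuous y),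
    IsSol d r L s x hx → IsSol d r L s y hy → seg d r x hx s = seg d r y hy s →
    ∀ t, s - r ≤ t → x t = y t

/-- Eq. x'(t) = L(t)x_t is shadowable. -/
def Shadowable (d : ℕ) (r : ℝ) (L : ℝ → (Ph d r →L[ℝ] Rd d)) : Prop :=
  ∀ ε, 0 < ε → ∃ δ, 0 < δ ∧ ∀ (y yd : ℝ → Rd d) (hy : Continuous y),
    ContinuousOn yd (Set.Ici 0) →
    (∀ t, 0 ≤ t → HasDerivWithinAt y (yd t) (Set.Ici 0) t) →
    (∀ t, 0 ≤ t → ‖yd t - L t (seg d r y hy t)‖ ≤ δ) →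
    ∃ (x : ℝ → Rd d) (hx : Continuous x), IsSol d r L 0 x hx ∧
      ∀ t, 0 ≤ t → ‖seg d r x hx t - seg d r y hy t‖ ≤ ε

/-- Eq. x'(t) = L(t)x_t is Hyers–Ulam stable. -/
def HyersUlam (d : ℕ) (r : ℝ) (L : ℝ → (Ph d r →L[ℝ] Rd d)) : Prop :=
  ∃ κ, 0 < κ ∧ ∀ δ, 0 < δ → ∀ (y yd : ℝ → Rd d) (hy : Continuous y),
    ContinuousOn yd (Set.Ici 0) →
    (∀ t, 0 ≤ t → HasDerivWithinAt y (yd t) (Set.Ici 0) t) →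
    (∀ t, 0 ≤ t → ‖yd t - L t (seg d r y hy t)‖ ≤ δ) →
    ∃ (x : ℝ → Rd d) (hx : Continuous x), IsSol d r L 0 x hx ∧
      ∀ t, 0 ≤ t → ‖seg d r x hx t - seg d r y hy t‖ ≤ κ * δ

/-- The stable subspace 𝒮(s) = {φ ∈ C : sup_{t ≥ s} ‖T(t,s)φ‖ < ∞}. -/
def stableSub (d : ℕ) (r : ℝ) (T : ℝ → ℝ → (Ph d r →L[ℝ] Ph d r)) (s : ℝ) :
    Submodule ℝ (Ph d r) where
  carrier := {φ | ∃ M, ∀ t, s ≤ t → ‖T t s φ‖ ≤ M}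
  add_mem' := by
    rintro a b ⟨Ma, hMa⟩ ⟨Mb, hMb⟩
    refine ⟨Ma + Mb, fun t ht => ?_⟩
    calc ‖T t s (a + b)‖ = ‖T t s a + T t s b‖ := by rw [map_add]
    _ ≤ ‖T t s a‖ + ‖T t s b‖ := norm_add_le _ _
    _ ≤ Ma + Mb := add_le_add (hMa t ht) (hMb t ht)
  zero_mem' := ⟨0, fun t ht => by simp⟩
  smul_mem' := by
    rintro c a ⟨Ma, hMa⟩
    refine ⟨‖c‖ * Ma, fun t ht => ?_⟩
    rw [map_smul]
    have h1 : ‖c • (T t s) a‖ = ‖c‖ * ‖(T t s) a‖ := @norm_smul ℝ (Ph d r) _ _ _ _ c _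
    rw [h1]
    exact mul_le_mul_of_nonneg_left (hMa t ht) (norm_nonneg c)

/-- Eq. x'(t) = L(t)x_t admits an exponential dichotomy (with solution operators T). -/
def ExpDich (d : ℕ) (r : ℝ) (T : ℝ → ℝ → (Ph d r →L[ℝ] Ph d r)) : Prop :=
  ∃ (P : ℝ → (Ph d r →L[ℝ] Ph d r)) (D lam : ℝ), 0 < D ∧ 0 < lam ∧
    (∀ t, 0 ≤ t → (P t).comp (P t) = P t) ∧
    (∀ t s, 0 ≤ s → s ≤ t → (P t).comp (T t s) = (T t s).comp (P s)) ∧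
    (∀ t s, 0 ≤ s → s ≤ t →
      Set.BijOn (⇑(T t s)) (LinearMap.ker (P s : Ph d r →ₗ[ℝ] Ph d r) : Set (Ph d r))
        (LinearMap.ker (P t : Ph d r →ₗ[ℝ] Ph d r) : Set (Ph d r))) ∧
    (∀ t s, 0 ≤ s → s ≤ t → ‖(T t s).comp (P s)‖ ≤ D * Real.exp (-lam * (t - s))) ∧
    (∀ t s, 0 ≤ t → t ≤ s → ∀ φ ∈ LinearMap.ker (P t : Ph d r →ₗ[ℝ] Ph d r),
      ‖φ‖ ≤ D * Real.exp (-lam * (s - t)) * ‖T s t φ‖)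


section Helpers
variable {d : ℕ} {r : ℝ}

lemma mem_stableSub {T : ℝ → ℝ → (Ph d r →L[ℝ] Ph d r)} {s : ℝ} {φ : Ph d r} :
    φ ∈ stableSub d r T s ↔ ∃ M, ∀ τ, s ≤ τ → ‖T τ s φ‖ ≤ M := Iff.rfl

lemma seg_cont (x : ℝ → Rd d) (hx : Continuous x) : Continuous (seg d r x hx) := by
  let H : C(ℝ × (Set.Icc (-r) (0:ℝ)), Rd d) :=
    ⟨fun p => x (p.1 + p.2.1),
      hx.comp (continuous_fst.add (continuous_subtype_val.comp continuous_snd))⟩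
  have h : seg d r x hx = fun τ => H.curry τ := by
    funext τ; exact ContinuousMap.ext fun θ => (H.curry_apply τ θ).symm
  rw [h]; exact H.curry.continuous

lemma seg_smul (c : ℝ) (x : ℝ → Rd d) (hx : Continuous x)
    (hcx : Continuous fun s => c • x s) (τ : ℝ) :
    seg d r (fun s => c • x s) hcx τ = c • seg d r x hx τ :=
  ContinuousMap.ext fun _ => rfl

lemma isSol_smul {L : ℝ → (Ph d r →L[ℝ] Rd d)} {s : ℝ} (c : ℝ) {x : ℝ → Rd d}
    {hx : Continuous x} (h : IsSol d r L s x hx) (hcx : Continuous fun τ => c • x τ) :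
    IsSol d r L s (fun τ => c • x τ) hcx := by
  intro τ hτ
  rw [seg_smul c x hx hcx, map_smul]
  exact (h τ hτ).const_smul c

lemma seg_eq_T {L : ℝ → (Ph d r →L[ℝ] Rd d)} {T : ℝ → ℝ → (Ph d r →L[ℝ] Ph d r)}
    (hT : IsSolOp d r L T) (huniq : UniqueSol d r L)
    {s : ℝ} (hs : 0 ≤ s) {x : ℝ → Rd d} {hx : Continuous x} (h : IsSol d r L s x hx) :
    ∀ τ, s ≤ τ → seg d r x hx τ = T τ s (seg d r x hx s) := by
  obtain ⟨y, hy, hysol, hyinit, hyT⟩ := hT s hs (seg d r x hx s)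
  intro τ hτ
  have hxy : ∀ t', s - r ≤ t' → x t' = y t' :=
    huniq s hs x y hx hy h hysol hyinit.symm
  rw [← hyT τ hτ]
  exact ContinuousMap.ext fun θ => hxy (τ + θ.1) (by have h1 := θ.2.1; linarith)

end Helpers

/-- If Eq. x'(t) = L(t)x_t is shadowable, then for every t ≥ 0 the phase space
decomposes as C = 𝒮(t) ⊕ 𝒰(t), where 𝒰(t) = T(t,0)𝒰 and C = 𝒮(0) ⊕ 𝒰. -/
theorem stmt10 (d : ℕ) (r : ℝ) (hr : 0 ≤ r)
    (L : ℝ → (Ph d r →L[ℝ] Rd d)) (hL : ContinuousOn L (Set.Ici 0))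
    (T : ℝ → ℝ → (Ph d r →L[ℝ] Ph d r))
    (hT : IsSolOp d r L T) (hcoc : Cocycle d r T)
    (huniq : UniqueSol d r L)
    (hsh : Shadowable d r L)
    (U : Submodule ℝ (Ph d r)) (hUfd : FiniteDimensional ℝ ↥U)
    (hUcompl : IsCompl (stableSub d r T 0) U) :
    ∀ t, 0 ≤ t → IsCompl (stableSub d r T t) (U.map (T t 0 : Ph d r →ₗ[ℝ] Ph d r)) := by
  intro t ht
  constructor
  · -- Disjointness
    rw [Submodule.disjoint_def]
    rintro φ hφS hφU
    obtain ⟨u, hu, rfl⟩ := Submodule.mem_map.mp hφU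
    obtain ⟨M1, hM1⟩ := mem_stableSub.mp hφS
    obtain ⟨x, hx, hxsol, hxinit, hxT⟩ := hT 0 le_rfl u
    obtain ⟨M2, hM2⟩ := (isCompact_Icc (a := (0:ℝ)) (b := t)).exists_bound_of_continuousOn
      ((seg_cont x hx).norm.continuousOn (s := Set.Icc 0 t))
    have huS : u ∈ stableSub d r T 0 := by
      rw [mem_stableSub]
      refine ⟨max M1 (M2 + 0), fun τ hτ => ?_⟩
      rcases le_total t τ with h | h
      · have hc : T τ 0 u = T τ t (T t 0 u) := by
          rw [hcoc.2 τ t 0 le_rfl ht h]; rfl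
        rw [hc]; exact le_trans (hM1 τ h) (le_max_left _ _)
      · rw [← hxT τ hτ]
        refine le_trans ?_ (le_max_right _ _)
        have := hM2 τ ⟨hτ, h⟩
        simp only [norm_norm] at this
        linarith
    have hu0 : u = 0 := by
      have hd := hUcompl.disjoint
      rw [Submodule.disjoint_def] at hd
      exact hd u huS hu
    rw [hu0, map_zero]
  · -- Codisjointness
    rw [codisjoint_iff, eq_top_iff]
    intro φ _
    rw [Submodule.mem_sup]
    obtain ⟨y, hy, hysol, hyinit, hyT⟩ := hT t ht φ
    set χ : ℝ → ℝ := fun τ => Real.smoothTransition (τ - (t+1)) with hχdef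
    have χcd : ContDiff ℝ 1 χ :=
      Real.smoothTransition.contDiff.comp (contDiff_id.sub contDiff_const)
    have χcont : Continuous χ := χcd.continuous
    have χdcont : Continuous (deriv χ) := χcd.continuous_deriv le_rfl
    have χ0 : ∀ τ, τ ≤ t+1 → χ τ = 0 := fun τ h =>
      Real.smoothTransition.zero_of_nonpos (by linarith)
    have χ1 : ∀ τ, t+2 ≤ τ → χ τ = 1 := fun τ h =>
      Real.smoothTransition.one_of_one_le (by linarith)
    have χdiff : ∀ τ, HasDerivAt χ (deriv χ τ) τ := fun τ =>
      ((χcd.differentiable one_ne_zero) τ).hasDerivAt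
    have χd0 : ∀ τ, τ < t+1 → deriv χ τ = 0 := by
      intro τ hτ
      have hev : χ =ᶠ[nhds τ] fun _ => (0:ℝ) := by
        filter_upwards [Iio_mem_nhds hτ] with s hs
        exact χ0 s (le_of_lt hs)
      rw [hev.deriv_eq, deriv_const]
    have χd1 : ∀ τ, t+2 < τ → deriv χ τ = 0 := by
      intro τ hτ
      have hev : χ =ᶠ[nhds τ] fun _ => (1:ℝ) := by
        filter_upwards [Ioi_mem_nhds hτ] with s hs
        exact χ1 s (le_of_lt hs)
      rw [hev.deriv_eq, deriv_const]
    set yt : ℝ → Rd d := fun τ => χ τ • y τ with hytdef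
    have hyt : Continuous yt := χcont.smul hy
    set f : ℝ → Rd d := fun τ => L (max τ t) (seg d r y hy (max τ t)) with hfdef
    have hmaxc : Continuous fun τ : ℝ => max τ t := continuous_id.max continuous_const
    have hfcont : ContinuousOn f (Set.Ici 0) := by
      apply ContinuousOn.clm_apply
      · exact hL.comp hmaxc.continuousOn (fun τ _ => le_trans ht (le_max_right τ t))
      · exact ((seg_cont y hy).comp hmaxc).continuousOn
    set yd : ℝ → Rd d := fun τ => deriv χ τ • y τ + χ τ • f τ with hyddef
    have hydcont : ContinuousOn yd (Set.Ici 0) :=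
      ((χdcont.smul hy).continuousOn).add (χcont.continuousOn.smul hfcont)
    have hydd : ∀ τ, 0 ≤ τ → HasDerivWithinAt yt (yd τ) (Set.Ici 0) τ := by
      intro τ hτ
      rcases lt_or_ge τ (t+1) with h | h
      · have hev : yt =ᶠ[nhds τ] fun _ => (0 : Rd d) := by
          filter_upwards [Iio_mem_nhds h] with s hs
          show χ s • y s = 0
          rw [χ0 s (le_of_lt hs), zero_smul]
        have h0 : HasDerivAt yt 0 τ :=
          (hasDerivAt_const τ (0 : Rd d)).congr_of_eventuallyEq hev
        have he : yd τ = 0 := by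
          show deriv χ τ • y τ + χ τ • f τ = 0
          rw [χd0 τ h, χ0 τ (le_of_lt h), zero_smul, zero_smul, add_zero]
        rw [he]; exact h0.hasDerivWithinAt
      · have hyd' : HasDerivAt y (L τ (seg d r y hy τ)) τ :=
          (hysol τ (by linarith)).hasDerivAt (Ici_mem_nhds (by linarith))
        have hprod := (χdiff τ).smul hyd'
        have he : yd τ = χ τ • L τ (seg d r y hy τ) + deriv χ τ • y τ := by
          show deriv χ τ • y τ + χ τ • f τ = _
          have hf : f τ = L τ (seg d r y hy τ) := by
            show L (max τ t) (seg d r y hy (max τ t)) = _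
            rw [max_eq_left (by linarith)]
          rw [hf, add_comm]
        rw [he]; exact hprod.hasDerivWithinAt
    have hsegyt : ∀ τ, t+2+r ≤ τ → seg d r yt hyt τ = seg d r y hy τ := by
      intro τ hτ
      refine ContinuousMap.ext fun θ => ?_
      show χ (τ + θ.1) • y (τ + θ.1) = y (τ + θ.1)
      rw [χ1 (τ + θ.1) (by have := θ.2.1; linarith), one_smul]
    have hE0 : ∀ τ, t+2+r < τ → yd τ - L τ (seg d r yt hyt τ) = 0 := by
      intro τ hτ
      show deriv χ τ • y τ + χ τ • f τ - L τ (seg d r yt hyt τ) = 0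
      have hf : f τ = L τ (seg d r y hy τ) := by
        show L (max τ t) (seg d r y hy (max τ t)) = _
        rw [max_eq_left (by linarith)]
      rw [hsegyt τ (le_of_lt hτ), hf, χd1 τ (by linarith), χ1 τ (by linarith),
        zero_smul, one_smul, zero_add, sub_self]
    have hEcont : ContinuousOn (fun τ => yd τ - L τ (seg d r yt hyt τ)) (Set.Ici 0) :=
      hydcont.sub (hL.clm_apply (seg_cont yt hyt).continuousOn)
    obtain ⟨K, hK⟩ := (isCompact_Icc (a := (0:ℝ)) (b := t+2+r)).exists_bound_of_continuousOn
      (hEcont.mono Icc_subset_Ici_self)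
    have hKbound : ∀ τ, 0 ≤ τ → ‖yd τ - L τ (seg d r yt hyt τ)‖ ≤ max K 0 := by
      intro τ hτ
      rcases le_or_gt τ (t+2+r) with h | h
      · exact le_trans (hK τ ⟨hτ, h⟩) (le_max_left _ _)
      · rw [hE0 τ h, norm_zero]; exact le_max_right _ _
    obtain ⟨δ, hδ, hshδ⟩ := hsh 1 one_pos
    set c : ℝ := δ / (max K 0 + 1) with hcdef
    have hmK : (0:ℝ) ≤ max K 0 := le_max_right _ _
    have hc0 : 0 < c := div_pos hδ (by linarith)
    have hcy : Continuous fun τ => c • yt τ := hyt.const_smul c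
    have hcyd : ContinuousOn (fun τ => c • yd τ) (Set.Ici 0) := hydcont.const_smul c
    have hcderiv : ∀ τ, 0 ≤ τ → HasDerivWithinAt (fun s => c • yt s) (c • yd τ) (Set.Ici 0) τ :=
      fun τ hτ => (hydd τ hτ).const_smul c
    have hcerr : ∀ τ, 0 ≤ τ → ‖c • yd τ - L τ (seg d r (fun s => c • yt s) hcy τ)‖ ≤ δ := by
      intro τ hτ
      rw [seg_smul c yt hyt hcy, map_smul, ← smul_sub]
      have hns : ‖c • (yd τ - L τ (seg d r yt hyt τ))‖
          = ‖c‖ * ‖yd τ - L τ (seg d r yt hyt τ)‖ := @norm_smul ℝ (Rd d) _ _ _ _ c _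
      rw [hns, Real.norm_eq_abs, abs_of_pos hc0]
      have h1 : ‖yd τ - L τ (seg d r yt hyt τ)‖ ≤ max K 0 + 1 :=
        le_trans (hKbound τ hτ) (by linarith)
      calc c * ‖yd τ - L τ (seg d r yt hyt τ)‖ ≤ c * (max K 0 + 1) :=
            mul_le_mul_of_nonneg_left h1 (le_of_lt hc0)
        _ = δ := by
            rw [hcdef]; field_simp
    obtain ⟨x, hx, hxsol, hxnear⟩ :=
      hshδ (fun s => c • yt s) (fun τ => c • yd τ) hcy hcyd hcderiv hcerr
    set z : ℝ → Rd d := fun τ => c⁻¹ • x τ with hzdef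
    have hz : Continuous z := hx.const_smul c⁻¹
    have hzsol : IsSol d r L 0 z hz := isSol_smul c⁻¹ hxsol hz
    have hznear : ∀ τ, 0 ≤ τ → ‖seg d r z hz τ - seg d r yt hyt τ‖ ≤ c⁻¹ := by
      intro τ hτ
      have h1 : seg d r z hz τ = c⁻¹ • seg d r x hx τ := seg_smul c⁻¹ x hx hz τ
      have h2 : seg d r (fun s => c • yt s) hcy τ = c • seg d r yt hyt τ :=
        seg_smul c yt hyt hcy τ
      have h3 : seg d r z hz τ - seg d r yt hyt τ
          = c⁻¹ • (seg d r x hx τ - seg d r (fun s => c • yt s) hcy τ) := by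
        rw [h1, h2, smul_sub, smul_smul, inv_mul_cancel₀ (ne_of_gt hc0), one_smul]
      have hns : ‖c⁻¹ • (seg d r x hx τ - seg d r (fun s => c • yt s) hcy τ)‖
          = ‖c⁻¹‖ * ‖seg d r x hx τ - seg d r (fun s => c • yt s) hcy τ‖ :=
        @norm_smul ℝ (Ph d r) _ _ _ _ c⁻¹ _
      rw [h3, hns, Real.norm_eq_abs, abs_of_pos (inv_pos.mpr hc0)]
      have := hxnear τ hτ
      calc c⁻¹ * ‖seg d r x hx τ - seg d r (fun s => c • yt s) hcy τ‖ ≤ c⁻¹ * 1 :=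
            mul_le_mul_of_nonneg_left this (le_of_lt (inv_pos.mpr hc0))
        _ = c⁻¹ := mul_one _
    have hzT : ∀ τ, 0 ≤ τ → seg d r z hz τ = T τ 0 (seg d r z hz 0) :=
      seg_eq_T hT huniq le_rfl hzsol
    obtain ⟨σ₀, u, hσ₀, hu, hsum⟩ :=
      Submodule.codisjoint_iff_exists_add_eq.mp hUcompl.codisjoint (seg d r z hz 0)
    obtain ⟨M0, hM0⟩ := mem_stableSub.mp hσ₀
    have hDcont : Continuous fun τ => seg d r y hy τ - seg d r yt hyt τ :=
      (seg_cont y hy).sub (seg_cont yt hyt)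
    obtain ⟨K1, hK1⟩ := (isCompact_Icc (a := t) (b := t+2+r)).exists_bound_of_continuousOn
      hDcont.continuousOn
    have hD : ∀ τ, t ≤ τ → ‖seg d r y hy τ - seg d r yt hyt τ‖ ≤ max K1 0 := by
      intro τ hτ
      rcases le_or_gt τ (t+2+r) with h | h
      · exact le_trans (hK1 τ ⟨hτ, h⟩) (le_max_left _ _)
      · rw [hsegyt τ (le_of_lt h), sub_self, norm_zero]; exact le_max_right _ _
    refine ⟨φ - T t 0 u, ?_, T t 0 u, Submodule.mem_map_of_mem hu, by abel⟩
    rw [mem_stableSub]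
    refine ⟨max K1 0 + c⁻¹ + M0, fun τ hτ => ?_⟩
    have hτ0 : (0:ℝ) ≤ τ := le_trans ht hτ
    have key : T τ t (φ - T t 0 u)
        = (seg d r y hy τ - seg d r yt hyt τ) + (seg d r yt hyt τ - seg d r z hz τ)
          + T τ 0 σ₀ := by
      have e1 : T τ t φ = seg d r y hy τ := (hyT τ hτ).symm
      have e2 : T τ t (T t 0 u) = T τ 0 u := by
        rw [hcoc.2 τ t 0 le_rfl ht hτ]; rfl
      have e3 : T τ 0 (seg d r z hz 0) = seg d r z hz τ := (hzT τ hτ0).symm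
      have e4 : T τ 0 u = seg d r z hz τ - T τ 0 σ₀ := by
        calc T τ 0 u = T τ 0 (σ₀ + u) - T τ 0 σ₀ := by rw [map_add]; abel
          _ = T τ 0 (seg d r z hz 0) - T τ 0 σ₀ := by rw [hsum]
          _ = seg d r z hz τ - T τ 0 σ₀ := by rw [e3]
      rw [map_sub, e1, e2, e4]; abel
    rw [key]
    refine le_trans (norm_add_le _ _) ?_
    have h5 : ‖(seg d r y hy τ - seg d r yt hyt τ) + (seg d r yt hyt τ - seg d r z hz τ)‖
        ≤ max K1 0 + c⁻¹ := by
      refine le_trans (norm_add_le _ _) (add_le_add (hD τ hτ) ?_)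
      rw [norm_sub_rev]; exact hznear τ hτ0
    exact add_le_add h5 (hM0 τ hτ0)


end
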